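/- Let Z be a nonnegative random variable with E[Z] ≤ C₀·α and E[Z²] ≤ C₀·α² for some constants C₀ ≥ 1 and 0 < α ≤ 1, and let p ≥ 1 be an integer. Then there is a constant C depending only on C₀ and p such that E[Z |ln Z|^p] ≤ C α |ln α|^p + C α (with the convention 0·|ln 0|^p = 0). -/

import Mathlib

open MeasureTheory

lemma logA5 (p : ℕ) (hp : 1 ≤ p) {w : ℝ} (hw : 1 ≤ w) :
    (Real.log w)^p ≤ (p:ℝ)^p * w := by
  have hw0 : (0:ℝ) < w := lt_of_lt_of_le one_pos hw
  have hp0 : (0:ℝ) < (p:ℝ) := by exact_mod_cast Nat.lt_of_lt_of_le Nat.zero_lt_one hp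
  have hr : (0:ℝ) < w ^ (1/(p:ℝ)) := Real.rpow_pos_of_pos hw0 _
  have h2 : Real.log (w ^ (1/(p:ℝ))) ≤ w ^ (1/(p:ℝ)) - 1 :=
    Real.log_le_sub_one_of_pos hr
  have h3 : Real.log (w ^ (1/(p:ℝ))) = (1/(p:ℝ)) * Real.log w :=
    Real.log_rpow hw0 _
  have h2' : (1/(p:ℝ)) * Real.log w ≤ w ^ (1/(p:ℝ)) - 1 := h3 ▸ h2
  have h5 := mul_le_mul_of_nonneg_left h2' hp0.le
  have h4 : (p:ℝ) * ((1/(p:ℝ)) * Real.log w) = Real.log w := by field_simp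
  have h1 : Real.log w ≤ (p:ℝ) * w ^ (1/(p:ℝ)) := by nlinarith
  have hlog0 : 0 ≤ Real.log w := Real.log_nonneg hw
  calc (Real.log w)^p ≤ ((p:ℝ) * w ^ (1/(p:ℝ)))^p := pow_le_pow_left₀ hlog0 h1 p
    _ = (p:ℝ)^p * (w ^ (1/(p:ℝ)))^p := mul_pow _ _ _
    _ = (p:ℝ)^p * w := by
        rw [← Real.rpow_natCast (w ^ (1/(p:ℝ))) p, ← Real.rpow_mul hw0.le]
        rw [one_div, inv_mul_cancel₀ hp0.ne', Real.rpow_one]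

lemma logB5 (p : ℕ) (hp : 1 ≤ p) {w : ℝ} (hw : 0 < w) :
    w * |Real.log w|^p ≤ (p:ℝ)^p * (1 + w^2) := by
  have hpp : (0:ℝ) ≤ (p:ℝ)^p := by positivity
  rcases le_or_gt 1 w with h | h
  · rw [abs_of_nonneg (Real.log_nonneg h)]
    have hA := logA5 p hp h
    nlinarith [mul_le_mul_of_nonneg_left hA hw.le]
  · have h1 : 1 ≤ w⁻¹ := by
      have hinv : 0 < w⁻¹ := inv_pos.mpr hw
      nlinarith [mul_inv_cancel₀ hw.ne']
    rw [abs_of_nonpos (Real.log_nonpos hw.le h.le), ← Real.log_inv]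
    have hA := logA5 p hp h1
    have hinv : w * w⁻¹ = 1 := mul_inv_cancel₀ hw.ne'
    nlinarith [mul_le_mul_of_nonneg_left hA hw.le, sq_nonneg w]

lemma logC5 (p : ℕ) (hp : 1 ≤ p) {z α : ℝ} (hz : 0 ≤ z) (hα : 0 < α) :
    z * |Real.log z|^p ≤
      2^p * |Real.log α|^p * z + 2^p * (p:ℝ)^p * (α + z^2/α) := by
  rcases eq_or_lt_of_le hz with h0 | h0
  · rw [← h0]
    simp only [mul_zero, zero_mul, abs_zero]
    positivity
  · have hw : 0 < z/α := div_pos h0 hα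
    have hsplit : |Real.log z| ≤ |Real.log α| + |Real.log (z/α)| := by
      have hlz : Real.log z = Real.log α + Real.log (z/α) := by
        rw [Real.log_div h0.ne' hα.ne']; ring
      rw [hlz]; exact abs_add_le _ _
    set a := |Real.log α| with ha
    set b := |Real.log (z/α)| with hb
    have ha0 : 0 ≤ a := abs_nonneg _
    have hb0 : 0 ≤ b := abs_nonneg _
    have hpow : |Real.log z|^p ≤ 2^p * (a^p + b^p) := by
      calc |Real.log z|^p ≤ (a + b)^p := pow_le_pow_left₀ (abs_nonneg _) hsplit p
        _ ≤ (2 * max a b)^p := by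
            apply pow_le_pow_left₀ (by positivity)
            rcases max_cases a b with ⟨hm, _⟩ | ⟨hm, _⟩ <;> rw [hm] <;> linarith
        _ = 2^p * (max a b)^p := mul_pow _ _ _
        _ ≤ 2^p * (a^p + b^p) := by
            apply mul_le_mul_of_nonneg_left _ (by positivity)
            rcases max_choice a b with hm | hm <;> rw [hm]
            · exact le_add_of_nonneg_right (pow_nonneg hb0 p)
            · exact le_add_of_nonneg_left (pow_nonneg ha0 p)
    have hB := logB5 p hp hw
    have hz2 : z * b^p ≤ (p:ℝ)^p * (α + z^2/α) := by
      calc z * b^p = α * (z/α * b^p) := by field_simp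
        _ ≤ α * ((p:ℝ)^p * (1 + (z/α)^2)) := mul_le_mul_of_nonneg_left hB hα.le
        _ = (p:ℝ)^p * (α + z^2/α) := by field_simp
    calc z * |Real.log z|^p ≤ z * (2^p * (a^p + b^p)) :=
          mul_le_mul_of_nonneg_left hpow hz
      _ = 2^p * a^p * z + 2^p * (z * b^p) := by ring
      _ ≤ 2^p * a^p * z + 2^p * ((p:ℝ)^p * (α + z^2/α)) := by
          have : (0:ℝ) ≤ 2^p := by positivity
          nlinarith
      _ = 2^p * a^p * z + 2^p * (p:ℝ)^p * (α + z^2/α) := by ring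

theorem stmt5 (C₀ : ℝ) (hC₀ : 1 ≤ C₀) (p : ℕ) (hp : 1 ≤ p) :
    ∃ C : ℝ, 0 < C ∧
      ∀ (Ω : Type) (_ : MeasurableSpace Ω) (μ : Measure Ω), IsProbabilityMeasure μ →
        ∀ (Z : Ω → ℝ) (α : ℝ), 0 < α → α ≤ 1 →
          (∀ ω, 0 ≤ Z ω) →
          Integrable Z μ → Integrable (fun ω => (Z ω)^2) μ →
          Integrable (fun ω => Z ω * |Real.log (Z ω)|^p) μ →
          (∫ ω, Z ω ∂μ) ≤ C₀ * α → (∫ ω, (Z ω)^2 ∂μ) ≤ C₀ * α^2 →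
          (∫ ω, Z ω * |Real.log (Z ω)|^p ∂μ) ≤ C * α * |Real.log α|^p + C * α := by
  have hp0 : (0:ℝ) < (p:ℝ) := by exact_mod_cast Nat.lt_of_lt_of_le Nat.zero_lt_one hp
  have hp1 : (1:ℝ) ≤ (p:ℝ) := by exact_mod_cast hp
  have hpp1 : (1:ℝ) ≤ (p:ℝ)^p := by
    calc (1:ℝ) = 1^p := (one_pow p).symm
      _ ≤ (p:ℝ)^p := pow_le_pow_left₀ zero_le_one hp1 p
  have h2p1 : (1:ℝ) ≤ 2^p := by
    calc (1:ℝ) = 1^p := (one_pow p).symm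
      _ ≤ 2^p := pow_le_pow_left₀ zero_le_one (by norm_num) p
  refine ⟨2^p * (p:ℝ)^p * (1 + C₀), by positivity, ?_⟩
  intro Ω _ μ hμ Z α hα hα1 hZ0 hZint hZ2int hZlint hEZ hEZ2
  have key : ∀ ω, Z ω * |Real.log (Z ω)|^p ≤
      2^p * |Real.log α|^p * Z ω + 2^p * (p:ℝ)^p * (α + (Z ω)^2/α) :=
    fun ω => logC5 p hp (hZ0 ω) hα
  have hIc : Integrable (fun ω => 2^p * (p:ℝ)^p * (α + (Z ω)^2/α)) μ :=
    (((integrable_const α).add (hZ2int.div_const α)).const_mul _)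
  have hI1 : Integrable (fun ω => 2^p * |Real.log α|^p * Z ω) μ := hZint.const_mul _
  have hle := integral_mono hZlint (hI1.add hIc) key
  simp only [Pi.add_apply] at hle
  rw [integral_add hI1 hIc, integral_const_mul, integral_const_mul,
    integral_add (integrable_const α) (hZ2int.div_const α), integral_const,
    integral_div] at hle
  simp only [probReal_univ, ENNReal.toReal_one, one_smul] at hle
  set A := ∫ ω, Z ω ∂μ with hA
  set B := ∫ ω, (Z ω)^2 ∂μ with hB
  set L := |Real.log α|^p with hL
  have hL0 : 0 ≤ L := by positivity
  have hBα : B / α ≤ C₀ * α := by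
    rw [div_le_iff₀ hα]
    nlinarith
  have hA0 : 0 ≤ A := by
    apply integral_nonneg
    intro ω; exact hZ0 ω
  have h2p0 : (0:ℝ) < (2:ℝ)^p := by positivity
  have hkey1 : 2^p * L * A ≤ 2^p * (p:ℝ)^p * (1 + C₀) * (α * L) := by
    have h1 : 2^p * L * A ≤ 2^p * L * (C₀ * α) := by
      apply mul_le_mul_of_nonneg_left hEZ (by positivity)
    have h2 : C₀ ≤ (p:ℝ)^p * (1 + C₀) := by nlinarith
    nlinarith [mul_nonneg (mul_nonneg h2p0.le hL0) hα.le]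
  have hkey2 : 2^p * (p:ℝ)^p * (α + B/α) ≤ 2^p * (p:ℝ)^p * (1 + C₀) * α := by
    have h1 : α + B/α ≤ (1 + C₀) * α := by nlinarith
    nlinarith [mul_nonneg h2p0.le (le_trans zero_le_one hpp1)]
  calc (∫ ω, Z ω * |Real.log (Z ω)|^p ∂μ) ≤ 2^p * L * A + 2^p * (p:ℝ)^p * (α + B/α) := hle
    _ ≤ 2^p * (p:ℝ)^p * (1 + C₀) * (α * L) + 2^p * (p:ℝ)^p * (1 + C₀) * α :=
        add_le_add hkey1 hkey2
    _ = 2^p * (p:ℝ)^p * (1 + C₀) * α * L + 2^p * (p:ℝ)^p * (1 + C₀) * α := by ring
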